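/- Let g : ℝ → [0,∞) be integrable, let m be a probability measure on ℝ, and let Φ ≥ 0. Then the quantity S(Φ, m) = 1 - exp(-Φ - ∫g) - ∫ g(s) exp(-∫_s^∞ g(t)dt) exp(-Φ·m([s,∞))) ds satisfies S(Φ, m) ≤ 1 - exp(-Φ). -/

import Mathlib

open MeasureTheory

open Set Filter

lemma exp_lip {a b : ℝ} (ha : 0 ≤ a) (hb : 0 ≤ b) :
    |Real.exp (-a) - Real.exp (-b)| ≤ |a - b| := by
  wlog h : a ≤ b generalizing a b
  · rw [abs_sub_comm, abs_sub_comm a b]; exact this hb ha (le_of_not_ge h)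
  have h1 : Real.exp (-b) = Real.exp (-a) * Real.exp (a - b) := by
    rw [← Real.exp_add]; ring_nf
  have h2 : 1 + (a - b) ≤ Real.exp (a - b) := by
    have := Real.add_one_le_exp (a - b); linarith
  have h3 : Real.exp (-a) ≤ 1 := Real.exp_le_one_iff.2 (by linarith)
  have h4 : 0 < Real.exp (-a) := Real.exp_pos _
  have h5 : Real.exp (-b) ≤ Real.exp (-a) := Real.exp_le_exp.2 (by linarith)
  rw [abs_of_nonneg (by linarith), abs_of_nonpos (by linarith)]
  nlinarith

section helpers
variable (f : ℝ → ℝ)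

lemma F_nonneg (h0 : ∀ s, 0 ≤ f s) (s : ℝ) : 0 ≤ ∫ t in Set.Ici s, f t :=
  setIntegral_nonneg measurableSet_Ici fun t _ => h0 t

lemma F_antitone (hf : Integrable f) (h0 : ∀ s, 0 ≤ f s) :
    Antitone fun s => ∫ t in Set.Ici s, f t := by
  intro a b hab
  exact setIntegral_mono_set hf.integrableOn (ae_of_all _ h0)
    (HasSubset.Subset.eventuallyLE (Set.Ici_subset_Ici.2 hab))

lemma F_meas (hf : Integrable f) (h0 : ∀ s, 0 ≤ f s) :
    Measurable fun s => ∫ t in Set.Ici s, f t :=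
  (F_antitone f hf h0).measurable

lemma F_le (hf : Integrable f) (h0 : ∀ s, 0 ≤ f s) (s : ℝ) :
    ∫ t in Set.Ici s, f t ≤ ∫ t, f t :=
  setIntegral_le_integral hf (ae_of_all _ h0)

lemma integrand_integrable (hf : Integrable f) (h0 : ∀ s, 0 ≤ f s) :
    Integrable fun s => f s * Real.exp (-(∫ t in Set.Ici s, f t)) := by
  refine hf.mono ?_ (ae_of_all _ fun s => ?_)
  · exact (hf.aestronglyMeasurable.mul
      ((Real.continuous_exp.comp continuous_neg).measurable.comp
        (F_meas f hf h0)).aestronglyMeasurable)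
  · rw [Real.norm_eq_abs, Real.norm_eq_abs, abs_mul]
    have h1 : |Real.exp (-(∫ t in Set.Ici s, f t))| ≤ 1 := by
      rw [abs_of_pos (Real.exp_pos _)]
      exact Real.exp_le_one_iff.2 (neg_nonpos.2 (F_nonneg f h0 s))
    nlinarith [abs_nonneg (f s)]

end helpers

lemma key_cont (h : ℝ → ℝ) (hc : Continuous h) (hcs : HasCompactSupport h)
    (h0 : ∀ s, 0 ≤ h s) :
    ∫ s, h s * Real.exp (-(∫ t in Set.Ici s, h t)) = 1 - Real.exp (-(∫ t, h t)) := by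
  have hint : Integrable h := hc.integrable_of_hasCompactSupport hcs
  set F : ℝ → ℝ := fun s => ∫ t in Set.Ici s, h t with hF
  -- F s = ∫ h - ∫_{Iic s} h
  have hsplit : ∀ s, F s = (∫ t, h t) - ∫ t in Set.Iic s, h t := by
    intro s
    have : (∫ t in Set.Iic s, h t) + (∫ t in Set.Ioi s, h t) = ∫ t, h t := by
      rw [← setIntegral_union (Iic_disjoint_Ioi le_rfl) measurableSet_Ioi
        hint.integrableOn hint.integrableOn, Set.Iic_union_Ioi, setIntegral_univ]
    rw [hF]; simp only
    rw [integral_Ici_eq_integral_Ioi]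
    linarith
  -- derivative of F
  have hFderiv : ∀ s, HasDerivAt F (-(h s)) s := by
    intro s
    have h1 : HasDerivAt (fun u => ∫ x in (0:ℝ)..u, h x) (h s) s :=
      intervalIntegral.integral_hasDerivAt_right hint.intervalIntegrable
        (hc.stronglyMeasurable.stronglyMeasurableAtFilter) hc.continuousAt
    have h2 : ∀ u, F u = (∫ t, h t) - (∫ t in Set.Iic (0:ℝ), h t) - ∫ x in (0:ℝ)..u, h x := by
      intro u
      have := intervalIntegral.integral_Iic_sub_Iic (a := (0:ℝ)) (b := u)
        (hint.integrableOn) (hint.integrableOn) (μ := volume) (f := h)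
      rw [hsplit u]; linarith
    have h3 := ((hasDerivAt_const s ((∫ t, h t) - (∫ t in Set.Iic (0:ℝ), h t))).sub h1)
    rw [zero_sub] at h3
    exact h3.congr_of_eventuallyEq (Eventually.of_forall fun u => (h2 u))
  -- support bound
  obtain ⟨R₀, hR₀⟩ : ∃ R, tsupport h ⊆ Metric.closedBall 0 R :=
    hcs.isBounded.subset_closedBall 0
  set R := max R₀ 0 with hRdef
  have hR : tsupport h ⊆ Metric.closedBall 0 R :=
    hR₀.trans (Metric.closedBall_subset_closedBall (le_max_left _ _))
  have hR0 : 0 ≤ R := le_max_right _ _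
  have hzero : ∀ t : ℝ, R < |t| → h t = 0 := by
    intro t ht
    apply image_eq_zero_of_notMem_tsupport
    intro hmem
    have := hR hmem
    rw [Metric.mem_closedBall, Real.dist_eq, sub_zero] at this
    linarith
  have hFtop : Tendsto F atTop (nhds (0:ℝ)) := by
    apply Tendsto.congr' _ tendsto_const_nhds
    filter_upwards [eventually_gt_atTop R] with s hs
    rw [hF]
    refine (setIntegral_eq_zero_of_forall_eq_zero fun t ht => ?_).symm
    rw [Set.mem_Ici] at ht
    exact hzero t (lt_of_lt_of_le hs (le_trans ht (le_abs_self t)))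
  have hFbot : Tendsto F atBot (nhds (∫ t, h t)) := by
    apply Tendsto.congr' _ tendsto_const_nhds
    filter_upwards [eventually_lt_atBot (-R)] with s hs
    rw [hsplit s]
    have : (∫ t in Set.Iic s, h t) = 0 := by
      refine setIntegral_eq_zero_of_forall_eq_zero fun t ht => ?_
      rw [Set.mem_Iic] at ht
      refine hzero t ?_
      rw [abs_of_nonpos (by linarith)]
      linarith
    rw [this]; ring
  -- derivative of exp(-F)
  have hφderiv : ∀ s, HasDerivAt (fun u => Real.exp (-(F u)))
      (Real.exp (-(F s)) * h s) s := by
    intro s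
    have h1 : HasDerivAt (fun u => -(F u)) (h s) s := by
      have := (hFderiv s).neg
      rwa [neg_neg] at this
    exact h1.exp
  have hFcont : Continuous F := by
    rw [continuous_iff_continuousAt]
    exact fun s => (hFderiv s).continuousAt
  have hφ'cont : Continuous fun s => Real.exp (-(F s)) * h s :=
    (Real.continuous_exp.comp hFcont.neg).mul hc
  have hφ'cs : HasCompactSupport fun s => Real.exp (-(F s)) * h s :=
    hcs.mul_left
  have hφ'int : Integrable fun s => Real.exp (-(F s)) * h s :=
    hφ'cont.integrable_of_hasCompactSupport hφ'cs
  have htop' : Tendsto (fun s => Real.exp (-(F s))) atTop (nhds (1:ℝ)) := by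
    have := (Real.continuous_exp.comp continuous_neg).tendsto (0:ℝ)
    have h2 := this.comp hFtop
    simpa [Function.comp_def] using h2
  have hbot' : Tendsto (fun s => Real.exp (-(F s))) atBot
      (nhds (Real.exp (-(∫ t, h t)))) := by
    have := (Real.continuous_exp.comp continuous_neg).tendsto (∫ t, h t)
    have h2 := this.comp hFbot
    simpa [Function.comp_def] using h2
  have hFTC := integral_of_hasDerivAt_of_tendsto hφderiv hφ'int hbot' htop'
  calc ∫ s, h s * Real.exp (-(∫ t in Set.Ici s, h t))
      = ∫ s, Real.exp (-(F s)) * h s := by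
        congr 1; funext s; rw [mul_comm, hF]
    _ = 1 - Real.exp (-(∫ t, h t)) := hFTC

lemma key (g : ℝ → ℝ) (hg : Integrable g) (hg0 : ∀ s, 0 ≤ g s) :
    ∫ s, g s * Real.exp (-(∫ t in Set.Ici s, g t)) = 1 - Real.exp (-(∫ t, g t)) := by
  set G := ∫ t, g t with hGdef
  have hG0 : 0 ≤ G := integral_nonneg hg0
  have hmain : ∀ δ : ℝ, 0 < δ →
      |(∫ s, g s * Real.exp (-(∫ t in Set.Ici s, g t))) - (1 - Real.exp (-G))| ≤ δ := by
    intro δ hδ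
    set ε := min 1 (δ / (3 + G)) with hεdef
    have hε : 0 < ε := lt_min one_pos (div_pos hδ (by linarith))
    have hε1 : ε ≤ 1 := min_le_left _ _
    have hεδ : ε * (3 + G) ≤ δ := by
      rw [← le_div_iff₀ (by linarith : (0:ℝ) < 3 + G)]
      exact min_le_right _ _
    obtain ⟨h, hcs, hdist, hcont, hint⟩ :=
      hg.exists_hasCompactSupport_integral_sub_le hε
    set k : ℝ → ℝ := fun x => max (h x) 0 with hkdef
    have hkc : Continuous k := hcont.max continuous_const
    have hkcs : HasCompactSupport k := by
      have : k = (fun y : ℝ => max y 0) ∘ h := rfl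
      rw [this]
      exact hcs.comp_left (by simp)
    have hk0 : ∀ s, 0 ≤ k s := fun s => le_max_right _ _
    have hkint : Integrable k := hkc.integrable_of_hasCompactSupport hkcs
    have hnormint : Integrable (fun x => ‖g x - k x‖) := (hg.sub hkint).norm
    have hdk : ∀ x, ‖g x - k x‖ ≤ ‖g x - h x‖ := by
      intro x
      rw [Real.norm_eq_abs, Real.norm_eq_abs, hkdef]
      rcases le_or_gt (h x) 0 with hx | hx
      · simp only [max_eq_right hx]
        rw [sub_zero, abs_of_nonneg (hg0 x), abs_of_nonneg (by linarith [hg0 x])]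
        linarith
      · simp [max_eq_left hx.le]
    have hgk : ∫ x, ‖g x - k x‖ ≤ ε := by
      refine le_trans (integral_mono hnormint ((hg.sub hint).norm) hdk) hdist
    -- tail integrals close
    have hFd : ∀ s, |(∫ t in Set.Ici s, g t) - (∫ t in Set.Ici s, k t)| ≤ ε := by
      intro s
      rw [← integral_sub hg.integrableOn hkint.integrableOn]
      calc |∫ t in Set.Ici s, (g t - k t)| ≤ ∫ t in Set.Ici s, ‖g t - k t‖ := by
            rw [← Real.norm_eq_abs]; exact norm_integral_le_integral_norm _
        _ ≤ ∫ t, ‖g t - k t‖ :=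
            setIntegral_le_integral hnormint (ae_of_all _ fun x => norm_nonneg _)
        _ ≤ ε := hgk
    have hed : ∀ s, |Real.exp (-(∫ t in Set.Ici s, g t)) -
        Real.exp (-(∫ t in Set.Ici s, k t))| ≤ ε := fun s =>
      le_trans (exp_lip (F_nonneg g hg0 s) (F_nonneg k hk0 s)) (hFd s)
    -- total masses close
    have hGk : |G - ∫ t, k t| ≤ ε := by
      rw [hGdef, ← integral_sub hg hkint]
      calc |∫ t, (g t - k t)| ≤ ∫ t, ‖g t - k t‖ := by
            rw [← Real.norm_eq_abs]; exact norm_integral_le_integral_norm _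
        _ ≤ ε := hgk
    have hkG : ∫ t, k t ≤ G + ε := by
      have := abs_le.1 hGk
      linarith [this.1]
    -- the two integrals are close
    have hII : |(∫ s, g s * Real.exp (-(∫ t in Set.Ici s, g t))) -
        (∫ s, k s * Real.exp (-(∫ t in Set.Ici s, k t)))| ≤ ε + ε * (G + ε) := by
      rw [← integral_sub (integrand_integrable g hg hg0) (integrand_integrable k hkint hk0)]
      have hptwise : ∀ s, |g s * Real.exp (-(∫ t in Set.Ici s, g t)) -
          k s * Real.exp (-(∫ t in Set.Ici s, k t))| ≤ ‖g s - k s‖ + k s * ε := by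
        intro s
        have e1 : g s * Real.exp (-(∫ t in Set.Ici s, g t)) -
            k s * Real.exp (-(∫ t in Set.Ici s, k t)) =
            (g s - k s) * Real.exp (-(∫ t in Set.Ici s, g t)) +
            k s * (Real.exp (-(∫ t in Set.Ici s, g t)) -
              Real.exp (-(∫ t in Set.Ici s, k t))) := by ring
        rw [e1]
        refine le_trans (abs_add_le _ _) ?_
        rw [abs_mul, abs_mul, Real.norm_eq_abs]
        have b1 : |Real.exp (-(∫ t in Set.Ici s, g t))| ≤ 1 := by
          rw [abs_of_pos (Real.exp_pos _)]
          exact Real.exp_le_one_iff.2 (neg_nonpos.2 (F_nonneg g hg0 s))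
        have b2 := hed s
        have b3 := abs_nonneg (g s - k s)
        have b4 := abs_nonneg (Real.exp (-(∫ t in Set.Ici s, g t)) -
              Real.exp (-(∫ t in Set.Ici s, k t)))
        rw [abs_of_nonneg (hk0 s)]
        nlinarith [hk0 s]
      calc |∫ s, (g s * Real.exp (-(∫ t in Set.Ici s, g t)) -
            k s * Real.exp (-(∫ t in Set.Ici s, k t)))|
          ≤ ∫ s, ‖g s * Real.exp (-(∫ t in Set.Ici s, g t)) -
            k s * Real.exp (-(∫ t in Set.Ici s, k t))‖ := by
            rw [← Real.norm_eq_abs]; exact norm_integral_le_integral_norm _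
        _ ≤ ∫ s, (‖g s - k s‖ + k s * ε) := by
            refine integral_mono ((integrand_integrable g hg hg0).sub
              (integrand_integrable k hkint hk0)).norm
              (hnormint.add (hkint.mul_const ε)) fun s => ?_
            rw [Real.norm_eq_abs]
            exact hptwise s
        _ = (∫ s, ‖g s - k s‖) + (∫ s, k s) * ε := by
            rw [integral_add hnormint (hkint.mul_const ε), integral_mul_const]
        _ ≤ ε + ε * (G + ε) := by
            have h1 : (∫ s, k s) * ε ≤ (G + ε) * ε :=
              mul_le_mul_of_nonneg_right hkG hε.le
            nlinarith
    have hkey := key_cont k hkc hkcs hk0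
    have hRHS : |(1 - Real.exp (-(∫ t, k t))) - (1 - Real.exp (-G))| ≤ ε := by
      have hlip := exp_lip (a := ∫ t, k t) (b := G) (integral_nonneg (μ := volume) hk0) hG0
      calc |(1 - Real.exp (-(∫ t, k t))) - (1 - Real.exp (-G))|
          = |Real.exp (-(∫ t, k t)) - Real.exp (-G)| := by rw [abs_sub_comm]; ring_nf
        _ ≤ |(∫ t, k t) - G| := hlip
        _ = |G - ∫ t, k t| := abs_sub_comm _ _
        _ ≤ ε := hGk
    calc |(∫ s, g s * Real.exp (-(∫ t in Set.Ici s, g t))) - (1 - Real.exp (-G))|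
        ≤ |(∫ s, g s * Real.exp (-(∫ t in Set.Ici s, g t))) -
            (∫ s, k s * Real.exp (-(∫ t in Set.Ici s, k t)))| +
          |(∫ s, k s * Real.exp (-(∫ t in Set.Ici s, k t))) - (1 - Real.exp (-G))| :=
          abs_sub_le _ _ _
      _ ≤ (ε + ε * (G + ε)) + ε := by
          refine add_le_add hII ?_
          rw [hkey]
          exact hRHS
      _ ≤ ε * (3 + G) := by nlinarith
      _ ≤ δ := hεδ
  have habs : |(∫ s, g s * Real.exp (-(∫ t in Set.Ici s, g t))) - (1 - Real.exp (-G))| ≤ 0 := by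
    refine le_of_forall_pos_le_add fun δ hδ => ?_
    have := hmain δ hδ
    linarith
  have := abs_nonpos_iff.1 habs
  linarith [sub_eq_zero.1 this]

/-- The pointwise integrand of the shaded sunlight functional: `Φ` is the projected
density, `m` the disintegration measure along the line, and `g` the density of the
shading measure along the line. -/
noncomputable def shadedSun (g : ℝ → ℝ) (Φ : ℝ) (m : Measure ℝ) : ℝ :=
  1 - Real.exp (-(Φ + ∫ t, g t)) -
    ∫ s, g s * Real.exp (-(∫ t in Set.Ici s, g t)) *
      Real.exp (-(Φ * (m (Set.Ici s)).toReal))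

/-- The light absorbed in the presence of shading is at most the light absorbed
without shading: `S(Φ, m) ≤ 1 - exp (-Φ)`. -/
theorem stmt_10 (g : ℝ → ℝ) (hg : Integrable g) (hg0 : ∀ s, 0 ≤ g s)
    (Φ : ℝ) (hΦ : 0 ≤ Φ) (m : Measure ℝ) [IsProbabilityMeasure m] :
    shadedSun g Φ m ≤ 1 - Real.exp (-Φ) := by
  unfold shadedSun
  set G := ∫ t, g t with hGdef
  have hG0 : 0 ≤ G := integral_nonneg hg0
  set w : ℝ → ℝ := fun s => Real.exp (-(Φ * (m (Set.Ici s)).toReal)) with hwdef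
  have ht_anti : Antitone fun s => (m (Set.Ici s)).toReal := fun a b hab =>
    ENNReal.toReal_mono (measure_ne_top m _) (measure_mono (Set.Ici_subset_Ici.2 hab))
  have hw_meas : Measurable w :=
    (Real.continuous_exp.comp ((continuous_const.mul continuous_id).neg)).measurable.comp
      ht_anti.measurable
  have ht_le1 : ∀ s, (m (Set.Ici s)).toReal ≤ 1 := by
    intro s
    have h1 : m (Set.Ici s) ≤ 1 := prob_le_one
    have := ENNReal.toReal_mono (by simp) h1
    simpa using this
  have ht_0 : ∀ s, 0 ≤ (m (Set.Ici s)).toReal := fun s => ENNReal.toReal_nonneg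
  have hw_le1 : ∀ s, w s ≤ 1 := fun s =>
    Real.exp_le_one_iff.2 (neg_nonpos.2 (mul_nonneg hΦ (ht_0 s)))
  have hw_ge : ∀ s, Real.exp (-Φ) ≤ w s := fun s =>
    Real.exp_le_exp.2 (neg_le_neg (mul_le_of_le_one_right hΦ (ht_le1 s)))
  have hw_pos : ∀ s, 0 < w s := fun s => Real.exp_pos _
  -- integrability of the shaded integrand
  have hImeas : AEStronglyMeasurable
      (fun s => g s * Real.exp (-(∫ t in Set.Ici s, g t)) * w s) volume :=
    (hg.aestronglyMeasurable.mul
      ((Real.continuous_exp.comp continuous_neg).measurable.comp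
        (F_meas g hg hg0)).aestronglyMeasurable).mul hw_meas.aestronglyMeasurable
  have hIint : Integrable fun s => g s * Real.exp (-(∫ t in Set.Ici s, g t)) * w s := by
    refine hg.mono hImeas (ae_of_all _ fun s => ?_)
    rw [Real.norm_eq_abs, Real.norm_eq_abs, abs_mul, abs_mul]
    have e1 : |Real.exp (-(∫ t in Set.Ici s, g t))| ≤ 1 := by
      rw [abs_of_pos (Real.exp_pos _)]
      exact Real.exp_le_one_iff.2 (neg_nonpos.2 (F_nonneg g hg0 s))
    have e2 : |w s| ≤ 1 := by rw [abs_of_pos (hw_pos s)]; exact hw_le1 s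
    have s1 : |g s| * |Real.exp (-(∫ t in Set.Ici s, g t))| * |w s| ≤
        |g s| * |Real.exp (-(∫ t in Set.Ici s, g t))| :=
      mul_le_of_le_one_right (mul_nonneg (abs_nonneg _) (abs_nonneg _)) e2
    have s2 : |g s| * |Real.exp (-(∫ t in Set.Ici s, g t))| ≤ |g s| :=
      mul_le_of_le_one_right (abs_nonneg _) e1
    linarith
  -- lower bound on the shaded integral
  have hlow : Real.exp (-Φ) * (1 - Real.exp (-G)) ≤
      ∫ s, g s * Real.exp (-(∫ t in Set.Ici s, g t)) * w s := by
    have h1 : ∫ s, g s * Real.exp (-(∫ t in Set.Ici s, g t)) * Real.exp (-Φ) ≤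
        ∫ s, g s * Real.exp (-(∫ t in Set.Ici s, g t)) * w s := by
      refine integral_mono ((integrand_integrable g hg hg0).mul_const _) hIint fun s => ?_
      exact mul_le_mul_of_nonneg_left (hw_ge s)
        (mul_nonneg (hg0 s) (Real.exp_pos _).le)
    have h2 : ∫ s, g s * Real.exp (-(∫ t in Set.Ici s, g t)) * Real.exp (-Φ) =
        (1 - Real.exp (-G)) * Real.exp (-Φ) := by
      rw [integral_mul_const, key g hg hg0]
    rw [mul_comm]
    linarith
  have hsplit : Real.exp (-(Φ + G)) = Real.exp (-Φ) * Real.exp (-G) := by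
    rw [← Real.exp_add]; ring_nf
  rw [hsplit]
  nlinarith [Real.exp_pos (-Φ), Real.exp_pos (-G)]
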